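/- Let Γ be a directed graph with a quasi-cocycle ν with constants Δ, η such that ν(v,u) > 2η for every directed edge from v to u. Then every directed path (x₀, x₁, …, x_n) in Γ satisfies η(j−i) < ν(x_i, x_j) < (Δ+η)(j−i) + η for all i < j, and hence is a ((Δ+η)/η, 1)-quasi-geodesic. -/

import Mathlib

/-- Let `Γ` be a directed graph (edge relation `E`) with a quasi-cocycle `ν`
with constants `Δ`, `η`, such that `ν v u > 2η` for every directed edge `(v,u)`.
Then every directed path `x₀, x₁, …, x_n` satisfies
`η(j−i) < ν (x i) (x j) < (Δ+η)(j−i) + η` for all `i < j`; consecutive vertices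
are within distance `1` in the underlying (symmetrized) graph, and
`j − i ≤ ((Δ+η)/η) · d(x i, x j)`, i.e. the path is a `((Δ+η)/η, 1)`-quasi-geodesic. -/
theorem directed_path_is_quasigeodesic {V : Type*} (E : V → V → Prop)
    (ν : V → V → ℝ) (Δ η : ℝ) (hΔ : 0 < Δ) (hη : 0 < η)
    (hadj : ∀ u v : V, (E u v ∨ E v u) → |ν u v| ≤ Δ)
    (hq : ∀ u v w : V, ν u v + ν v w - η ≤ ν u w ∧ ν u w ≤ ν u v + ν v w + η)
    (hdir : ∀ u v : V, E u v → 2 * η < ν u v)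
    (n : ℕ) (x : Fin (n + 1) → V)
    (hpath : ∀ i : Fin n, E (x i.castSucc) (x i.succ)) :
    (∀ i : Fin n, (SimpleGraph.fromRel E).dist (x i.castSucc) (x i.succ) ≤ 1) ∧
    ∀ i j : Fin (n + 1), i < j →
      (η * (((j : ℕ) : ℝ) - ((i : ℕ) : ℝ)) < ν (x i) (x j) ∧
        ν (x i) (x j) < (Δ + η) * (((j : ℕ) : ℝ) - ((i : ℕ) : ℝ)) + η) ∧
      ((j : ℕ) : ℝ) - ((i : ℕ) : ℝ) ≤
        ((Δ + η) / η) * ((SimpleGraph.fromRel E).dist (x i) (x j) : ℝ) := by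
  set G := SimpleGraph.fromRel E with hG
  -- ν on the diagonal is at most η
  have hself : ∀ u : V, ν u u ≤ η := by
    intro u
    have h := (hq u u u).1
    linarith
  -- bound on ν along an edge of G
  have hadjG : ∀ u v : V, G.Adj u v → |ν u v| ≤ Δ := by
    intro u v h
    rw [hG, SimpleGraph.fromRel_adj] at h
    exact hadj u v h.2
  -- walk bound: ν u v ≤ length * (Δ+η) - η  (or u = v)
  have wb : ∀ (u v : V) (w : G.Walk u v),
      u = v ∨ ν u v ≤ (w.length : ℝ) * (Δ + η) - η := by
    intro u v w
    induction w with
    | nil => exact Or.inl rfl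
    | cons hab w ih =>
      rename_i a b c
      right
      have hb1 : |ν a b| ≤ Δ := hadjG a b hab
      have hb2 : ν a b ≤ Δ := le_trans (le_abs_self _) hb1
      have htri := (hq a b c).2
      have hlen : ((SimpleGraph.Walk.cons hab w).length : ℝ) = (w.length : ℝ) + 1 := by
        rw [SimpleGraph.Walk.length_cons]
        push_cast
        ring
      rw [hlen]
      have hwl : (0 : ℝ) ≤ (w.length : ℝ) := Nat.cast_nonneg _
      rcases ih with h | h
      · subst h
        nlinarith
      · nlinarith
  -- reformulate the path via ℕ-indexed vertices
  set y : ℕ → V := fun k => if h : k < n + 1 then x ⟨k, h⟩ else x 0 with hy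
  have hyx : ∀ i : Fin (n + 1), y (i : ℕ) = x i := by
    intro i
    simp [hy, i.isLt]
    intro h
    have := i.isLt
    omega
  have hE : ∀ k : ℕ, k < n → E (y k) (y (k + 1)) := by
    intro k hk
    have h1 : y k = x (Fin.castSucc ⟨k, hk⟩) := by
      simp only [hy]
      rw [dif_pos (Nat.lt_succ_of_lt hk)]
      rfl
    have h2 : y (k + 1) = x (Fin.succ ⟨k, hk⟩) := by
      simp only [hy]
      rw [dif_pos (Nat.succ_lt_succ hk)]
      rfl
    rw [h1, h2]
    exact hpath ⟨k, hk⟩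
  -- key estimate by induction
  have key : ∀ (m i : ℕ), i + m + 1 ≤ n →
      η * ((m : ℝ) + 1) < ν (y i) (y (i + m + 1)) ∧
      ν (y i) (y (i + m + 1)) < (Δ + η) * ((m : ℝ) + 1) + η := by
    intro m
    induction m with
    | zero =>
      intro i hi
      have he := hE i (by omega)
      have h1 := hdir _ _ he
      have h2 : ν (y i) (y (i + 1)) ≤ Δ := le_trans (le_abs_self _) (hadj _ _ (Or.inl he))
      simp only [Nat.cast_zero, zero_add, mul_one, Nat.add_zero]
      exact ⟨by linarith, by linarith⟩
    | succ m ih =>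
      intro i hi
      have hprev := ih i (by omega)
      have he := hE (i + m + 1) (by omega)
      have h1 := hdir _ _ he
      have h2 : ν (y (i + m + 1)) (y (i + m + 1 + 1)) ≤ Δ :=
        le_trans (le_abs_self _) (hadj _ _ (Or.inl he))
      have htri := hq (y i) (y (i + m + 1)) (y (i + m + 1 + 1))
      have heq : i + (m + 1) + 1 = i + m + 1 + 1 := by omega
      rw [heq]
      push_cast
      constructor <;> nlinarith [htri.1, htri.2, hprev.1, hprev.2]
  -- reachability
  have step : ∀ k : ℕ, k < n → G.Reachable (y k) (y (k + 1)) := by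
    intro k hk
    by_cases hEq : y k = y (k + 1)
    · rw [hEq]
    · exact (SimpleGraph.fromRel_adj E _ _ |>.2 ⟨hEq, Or.inl (hE k hk)⟩).reachable
  have reach : ∀ (m i : ℕ), i + m ≤ n → G.Reachable (y i) (y (i + m)) := by
    intro m
    induction m with
    | zero => intro i _; rfl
    | succ m ih =>
      intro i hi
      have h1 := ih i (by omega)
      have h2 := step (i + m) (by omega)
      exact h1.trans h2
  constructor
  · -- distances between consecutive vertices
    intro i
    by_cases hEq : x i.castSucc = x i.succ
    · rw [hEq, SimpleGraph.dist_self]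
      exact Nat.zero_le 1
    · have hAdj : G.Adj (x i.castSucc) (x i.succ) :=
        (SimpleGraph.fromRel_adj E _ _).2 ⟨hEq, Or.inl (hpath i)⟩
      have := SimpleGraph.dist_le (SimpleGraph.Walk.cons hAdj SimpleGraph.Walk.nil)
      simpa using this
  · intro i j hij
    have hij' : (i : ℕ) < (j : ℕ) := hij
    have hjn : (j : ℕ) ≤ n := Nat.lt_succ_iff.mp j.isLt
    set m : ℕ := (j : ℕ) - (i : ℕ) - 1 with hm
    have h1 : (i : ℕ) + m + 1 = (j : ℕ) := by omega
    have hkey := key m (i : ℕ) (by omega)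
    rw [h1, hyx i, hyx j] at hkey
    have hcast : ((m : ℝ) + 1) = ((j : ℕ) : ℝ) - ((i : ℕ) : ℝ) := by
      have : ((i : ℕ) : ℝ) + (m : ℝ) + 1 = ((j : ℕ) : ℝ) := by exact_mod_cast congrArg (Nat.cast : ℕ → ℝ) h1
      linarith
    rw [hcast] at hkey
    refine ⟨hkey, ?_⟩
    -- distance bound
    have hne : x i ≠ x j := by
      intro hEq
      have h2 := hself (x i)
      have h3 : (1 : ℝ) ≤ ((j : ℕ) : ℝ) - ((i : ℕ) : ℝ) := by
        rw [← hcast]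
        have : (0 : ℝ) ≤ (m : ℝ) := Nat.cast_nonneg _
        linarith
      rw [← hEq] at hkey
      nlinarith [hkey.1]
    have hr : G.Reachable (x i) (x j) := by
      rw [← hyx i, ← hyx j, ← h1]
      exact reach (m + 1) (i : ℕ) (by omega)
    obtain ⟨w, hw⟩ := hr.exists_walk_length_eq_dist
    rcases wb _ _ w with h | h
    · exact absurd h hne
    · rw [hw] at h
      have hd : (0 : ℝ) ≤ ((G.dist (x i) (x j) : ℕ) : ℝ) := Nat.cast_nonneg _
      have hlt : η * (((j : ℕ) : ℝ) - ((i : ℕ) : ℝ)) < (Δ + η) * ((G.dist (x i) (x j) : ℕ) : ℝ) := by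
        nlinarith [hkey.1]
      rw [div_mul_eq_mul_div, le_div_iff₀ hη]
      nlinarith
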